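/- If V is a ring in which every right V-module is flat, then for every a in V there exists x in V such that a = a*x*a. -/

import Mathlib

open scoped TensorProduct
open MulOpposite

/-- The balancing relations defining the tensor product `M ⊗_V N` of a right `V`-module `M`
and a left `V`-module `N` over a (possibly noncommutative) ring `V`, as a quotient of the
tensor product of abelian groups `M ⊗[ℤ] N`. -/
def tensorRel (V : Type) [Ring V] (M N : Type) [AddCommGroup M] [Module Vᵐᵒᵖ M]
    [AddCommGroup N] [Module V N] : Submodule ℤ (M ⊗[ℤ] N) :=
  Submodule.span ℤ
    {z | ∃ (m : M) (a : V) (n : N), z = (op a • m) ⊗ₜ[ℤ] n - m ⊗ₜ[ℤ] (a • n)}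

/-- The tensor product `M ⊗_V N` of a right `V`-module and a left `V`-module. -/
abbrev NCTensor (V : Type) [Ring V] (M N : Type) [AddCommGroup M] [Module Vᵐᵒᵖ M]
    [AddCommGroup N] [Module V N] : Type :=
  (M ⊗[ℤ] N) ⧸ tensorRel V M N

/-- The map `M ⊗_V N → M ⊗_V N'` induced by a map `f : N → N'` of left `V`-modules. -/
noncomputable def NCTensor.map (V : Type) [Ring V] (M : Type) [AddCommGroup M]
    [Module Vᵐᵒᵖ M] {N N' : Type} [AddCommGroup N] [Module V N] [AddCommGroup N']
    [Module V N'] (f : N →ₗ[V] N') : NCTensor V M N →ₗ[ℤ] NCTensor V M N' :=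
  Submodule.mapQ _ _
    (TensorProduct.map LinearMap.id f.toAddMonoidHom.toIntLinearMap)
    (by
      rw [tensorRel, Submodule.span_le]
      rintro z ⟨m, a, n, rfl⟩
      simp only [SetLike.mem_coe, Submodule.mem_comap, map_sub, TensorProduct.map_tmul,
        LinearMap.id_coe, id_eq, AddMonoidHom.coe_toIntLinearMap, LinearMap.toAddMonoidHom_coe]
      exact Submodule.subset_span ⟨m, a, f n, by
        erw [map_sub, TensorProduct.map_tmul, TensorProduct.map_tmul]; simp [map_smul]⟩)

/-- A right `V`-module `M` is flat if tensoring with `M` preserves injectivity of maps of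
left `V`-modules (equivalently, the functor `M ⊗_V (-)` is exact). -/
def RightFlat (V : Type) [Ring V] (M : Type) [AddCommGroup M] [Module Vᵐᵒᵖ M] : Prop :=
  ∀ (N N' : Type) [AddCommGroup N] [Module V N] [AddCommGroup N'] [Module V N']
    (f : N →ₗ[V] N'), Function.Injective f → Function.Injective (NCTensor.map V M f)

/-- The additive subgroup `aVa` of `V`. -/
def aVa (V : Type) [Ring V] (a : V) : AddSubgroup V where
  carrier := {v | ∃ x : V, v = a * x * a}
  zero_mem' := ⟨0, by simp⟩
  add_mem' := by
    rintro u v ⟨x, rfl⟩ ⟨y, rfl⟩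
    exact ⟨x + y, by rw [mul_add, add_mul]⟩
  neg_mem' := by
    rintro v ⟨x, rfl⟩
    exact ⟨-x, by rw [mul_neg, neg_mul]⟩

/-- If `V` is a ring in which every right `V`-module is flat, then for every
`a ∈ V` there exists `x ∈ V` with `a = a * x * a`. -/
theorem stmt_1 (V : Type) [Ring V]
    (hflat : ∀ (M : Type) [AddCommGroup M] [Module Vᵐᵒᵖ M], RightFlat V M) :
    ∀ a : V, ∃ x : V, a = a * x * a := by
  intro a
  -- the right ideal aV
  set J : Submodule Vᵐᵒᵖ V := Submodule.span Vᵐᵒᵖ {a} with hJ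
  -- the right module M = V / aV
  set M : Type := V ⧸ J with hM
  -- the left ideal I = Va
  set I : Submodule V V := Submodule.span V {a} with hI
  -- target abelian group V / aVa
  set K : Submodule ℤ V := (aVa V a).toIntSubmodule with hK
  have haI : a ∈ I := Submodule.mem_span_singleton_self a
  have haJ : a ∈ J := Submodule.mem_span_singleton_self a
  -- the bilinear map V × V → V/aVa, (v, n) ↦ [v * n]
  let g2 : V →ₗ[ℤ] V →ₗ[ℤ] (V ⧸ K) :=
    LinearMap.mk₂ ℤ (fun v n => K.mkQ (v * n))
      (fun v w n => by simp [add_mul])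
      (fun c v n => by simp only [Submodule.mkQ_apply, ← Submodule.Quotient.mk_smul, smul_mul_assoc])
      (fun v n m => by simp [mul_add])
      (fun c v n => by simp only [Submodule.mkQ_apply, ← Submodule.Quotient.mk_smul, mul_smul_comm])
  -- restrict the second argument to I
  let gI : V →ₗ[ℤ] I →ₗ[ℤ] (V ⧸ K) :=
    g2.compl₂ (I.subtype.toAddMonoidHom.toIntLinearMap)
  have hker : J.restrictScalars ℤ ≤ LinearMap.ker gI := by
    intro v hv
    rw [Submodule.restrictScalars_mem, hJ, Submodule.mem_span_singleton] at hv
    obtain ⟨y, rfl⟩ := hv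
    rw [LinearMap.mem_ker]
    ext n
    obtain ⟨c, hc⟩ := Submodule.mem_span_singleton.mp n.2
    have hn : (n : V) = c * a := by rw [← hc, smul_eq_mul]
    have : (y • a) * (n : V) ∈ K := by
      refine ⟨y.unop * c, ?_⟩
      rw [hn, MulOpposite.smul_eq_mul_unop, mul_assoc, mul_assoc, ← mul_assoc y.unop]
    simpa [gI, g2] using (Submodule.Quotient.mk_eq_zero K).mpr this
  -- descend to M = V/aV in the first argument
  let B : M →ₗ[ℤ] I →ₗ[ℤ] (V ⧸ K) := Submodule.liftQ (J.restrictScalars ℤ) gI hker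
  -- the induced map M ⊗ I → V/aVa
  let φ : (M ⊗[ℤ] I) →ₗ[ℤ] (V ⧸ K) := TensorProduct.lift B
  have hφrel : tensorRel V M I ≤ LinearMap.ker φ := by
    rw [tensorRel, Submodule.span_le]
    rintro z ⟨m, b, n, rfl⟩
    obtain ⟨v, rfl⟩ := Submodule.Quotient.mk_surjective J m
    have h1 : op b • (Submodule.Quotient.mk v : M) = Submodule.Quotient.mk (v * b) := by
      rw [← Submodule.Quotient.mk_smul, op_smul_eq_mul]
    have h2 : ((b • n : I) : V) = b * (n : V) := rfl
    simp only [SetLike.mem_coe, LinearMap.mem_ker, map_sub, h1]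
    erw [TensorProduct.lift.tmul, TensorProduct.lift.tmul]
    show B (Submodule.Quotient.mk (v * b)) n - B (Submodule.Quotient.mk v) (b • n) = 0
    show K.mkQ ((v * b) * (n : V)) - K.mkQ (v * ((b • n : I) : V)) = 0
    rw [h2, mul_assoc, sub_self]
  -- the element [1] ⊗ a of M ⊗ I
  set w : M ⊗[ℤ] I := (Submodule.Quotient.mk (1 : V) : M) ⊗ₜ[ℤ] (⟨a, haI⟩ : I) with hw
  -- its image in M ⊗_V V is zero
  have hmapw : NCTensor.map V M I.subtype (Submodule.Quotient.mk w) = 0 := by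
    rw [NCTensor.map]
    erw [Submodule.mapQ_apply]
    rw [hw]
    erw [TensorProduct.map_tmul]
    rw [Submodule.Quotient.mk_eq_zero]
    have hkey : (op a • (Submodule.Quotient.mk (1 : V) : M)) = 0 := by
      rw [← Submodule.Quotient.mk_smul, op_smul_eq_mul, one_mul,
        Submodule.Quotient.mk_eq_zero]
      exact haJ
    have hrel : ((op a • (Submodule.Quotient.mk (1 : V) : M)) ⊗ₜ[ℤ] (1 : V)
        - (Submodule.Quotient.mk (1 : V) : M) ⊗ₜ[ℤ] (a • (1 : V))) ∈ tensorRel V M V :=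
      Submodule.subset_span ⟨Submodule.Quotient.mk (1 : V), a, 1, rfl⟩
    rw [hkey, TensorProduct.zero_tmul, zero_sub, smul_eq_mul, mul_one] at hrel
    have := neg_mem hrel
    rw [neg_neg] at this
    convert this using 2 <;> rfl
  -- by flatness, [1] ⊗ a = 0 already in M ⊗_V I
  have hinj := hflat M I V I.subtype (Submodule.injective_subtype I)
  have hw0 : (Submodule.Quotient.mk w : NCTensor V M I) = 0 := by
    apply hinj
    rw [hmapw, map_zero]
  have hwmem : w ∈ tensorRel V M I := (Submodule.Quotient.mk_eq_zero _).mp hw0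
  -- apply φ
  have hφw : φ w = 0 := hφrel hwmem
  rw [hw] at hφw
  erw [TensorProduct.lift.tmul] at hφw
  have : B (Submodule.Quotient.mk (1 : V)) ⟨a, haI⟩ = 0 := hφw
  have ha0 : K.mkQ (1 * a) = 0 := this
  rw [one_mul, Submodule.mkQ_apply, Submodule.Quotient.mk_eq_zero] at ha0
  exact ha0
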